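/- Let (A_i)_{i ∈ Fin s} and (B_i)_{i ∈ Fin s} be two finite families of bilinear forms ℂ^n × ℂ^n → ℂ. There exists a homeomorphism φ : ℂ^n → ℂ^n such that A_i(u,v) = B_i(φ u, φ v) for all i ∈ Fin s and all u, v ∈ ℂ^n if and only if there exists a linear bijection ψ : ℂ^n → ℂ^n such that A_i(u,v) = B_i(ψ u, ψ v) for all i ∈ Fin s and all u, v ∈ ℂ^n. -/

import Mathlib

section Aux

variable {n s : ℕ}

private noncomputable abbrev auxT (B : Fin s → (Fin n → ℂ) →ₗ[ℂ] (Fin n → ℂ) →ₗ[ℂ] ℂ)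
    (w : Fin n → (Fin n → ℂ)) :
    (Fin n → ℂ) →ₗ[ℂ] (Fin s × Fin n → ℂ) × (Fin s × Fin n → ℂ) :=
  LinearMap.prod
    (LinearMap.pi fun p => (B p.1).flip (w p.2))
    (LinearMap.pi fun p => B p.1 (w p.2))

private lemma auxT_apply (B : Fin s → (Fin n → ℂ) →ₗ[ℂ] (Fin n → ℂ) →ₗ[ℂ] ℂ)
    (w : Fin n → (Fin n → ℂ)) (x : Fin n → ℂ) :
    auxT B w x = (fun p => B p.1 x (w p.2), fun p => B p.1 (w p.2) x) := rfl

/-- Main auxiliary lemma: only surjectivity of the equivalence is used, no topology. -/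
private lemma aux_main (n s : ℕ)
    (A B : Fin s → (Fin n → ℂ) →ₗ[ℂ] (Fin n → ℂ) →ₗ[ℂ] ℂ)
    (φ : (Fin n → ℂ) ≃ (Fin n → ℂ))
    (h : ∀ i u v, A i u v = B i (φ u) (φ v)) :
    ∃ ψ : (Fin n → ℂ) ≃ₗ[ℂ] (Fin n → ℂ), ∀ i u v, A i u v = B i (ψ u) (ψ v) := by
  classical
  set e : Fin n → (Fin n → ℂ) := fun k => Pi.single k 1 with he
  set TB : (Fin n → ℂ) →ₗ[ℂ] (Fin s × Fin n → ℂ) × (Fin s × Fin n → ℂ) := auxT B e with hTB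
  set S : (Fin n → ℂ) →ₗ[ℂ] (Fin s × Fin n → ℂ) × (Fin s × Fin n → ℂ) :=
    auxT A (fun k => φ.symm (e k)) with hS
  -- S = TB ∘ φ
  have hST : ∀ u, S u = TB (φ u) := by
    intro u
    rw [hS, hTB, auxT_apply, auxT_apply]
    refine Prod.ext ?_ ?_ <;> funext p <;> simp only
    · rw [h p.1 u (φ.symm (e p.2)), Equiv.apply_symm_apply]
    · rw [h p.1 (φ.symm (e p.2)) u, Equiv.apply_symm_apply]
  -- kernel of TB is the radical of the system B
  have memTB : ∀ x, x ∈ LinearMap.ker TB ↔ ∀ i y, B i x y = 0 ∧ B i y x = 0 := by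
    intro x
    constructor
    · intro hx i y
      have hx' : (fun p : Fin s × Fin n => B p.1 x (e p.2),
          fun p : Fin s × Fin n => B p.1 (e p.2) x) = (0, 0) := by
        have := LinearMap.mem_ker.mp hx
        rwa [hTB, auxT_apply] at this
      have h1 : ∀ i k, B i x (e k) = 0 := fun i k => congrFun (congrArg Prod.fst hx') (i, k)
      have h2 : ∀ i k, B i (e k) x = 0 := fun i k => congrFun (congrArg Prod.snd hx') (i, k)
      constructor
      · have : B i x = 0 := (Pi.basisFun ℂ (Fin n)).ext fun k => by
          simpa [he] using h1 i k
        simp [this]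
      · have : (B i).flip x = 0 := (Pi.basisFun ℂ (Fin n)).ext fun k => by
          simpa [he] using h2 i k
        simpa using congrFun (congrArg DFunLike.coe this) y
    · intro hx
      rw [LinearMap.mem_ker, hTB, auxT_apply]
      refine Prod.ext ?_ ?_ <;> funext p <;> simp only [Prod.fst_zero, Prod.snd_zero, Pi.zero_apply]
      · exact (hx p.1 (e p.2)).1
      · exact (hx p.1 (e p.2)).2
  -- kernel of S is the radical of the system A
  have memS : ∀ u, u ∈ LinearMap.ker S ↔ ∀ i v, A i u v = 0 ∧ A i v u = 0 := by
    intro u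
    rw [LinearMap.mem_ker, hST u, ← LinearMap.mem_ker, memTB]
    constructor
    · intro hu i v
      exact ⟨by rw [h i u v]; exact (hu i (φ v)).1, by rw [h i v u]; exact (hu i (φ v)).2⟩
    · intro hu i y
      constructor
      · have := (hu i (φ.symm y)).1
        rwa [h i u (φ.symm y), Equiv.apply_symm_apply] at this
      · have := (hu i (φ.symm y)).2
        rwa [h i (φ.symm y) u, Equiv.apply_symm_apply] at this
  -- ranges coincide
  have hrange : LinearMap.range S = LinearMap.range TB := by
    apply le_antisymm
    · rintro _ ⟨u, rfl⟩
      exact ⟨φ u, (hST u).symm⟩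
    · rintro _ ⟨x, rfl⟩
      exact ⟨φ.symm x, by rw [hST, Equiv.apply_symm_apply]⟩
  -- kernels have the same finrank
  have hfr : Module.finrank ℂ (LinearMap.ker S) = Module.finrank ℂ (LinearMap.ker TB) := by
    have h1 := S.finrank_range_add_finrank_ker
    have h2 := TB.finrank_range_add_finrank_ker
    rw [hrange] at h1
    omega
  -- complements
  obtain ⟨CA, hCA⟩ := (LinearMap.ker S).exists_isCompl
  obtain ⟨CB, hCB⟩ := (LinearMap.ker TB).exists_isCompl
  -- equivalences
  set KK : LinearMap.ker S ≃ₗ[ℂ] LinearMap.ker TB := LinearEquiv.ofFinrankEq _ _ hfr with hKK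
  set eq : ((Fin n → ℂ) ⧸ LinearMap.ker S) ≃ₗ[ℂ] ((Fin n → ℂ) ⧸ LinearMap.ker TB) :=
    (S.quotKerEquivRange.trans (LinearEquiv.ofEq _ _ hrange)).trans TB.quotKerEquivRange.symm
    with heq
  set qA := Submodule.quotientEquivOfIsCompl (LinearMap.ker S) CA hCA with hqA
  set qB := Submodule.quotientEquivOfIsCompl (LinearMap.ker TB) CB hCB with hqB
  set CC : CA ≃ₗ[ℂ] CB := qA.symm.trans (eq.trans qB) with hCC
  set ψ : (Fin n → ℂ) ≃ₗ[ℂ] (Fin n → ℂ) :=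
    (Submodule.prodEquivOfIsCompl _ _ hCA).symm.trans
      ((KK.prodCongr CC).trans (Submodule.prodEquivOfIsCompl _ _ hCB)) with hψ
  -- ψ applied to k + c
  have hψapp : ∀ (k : LinearMap.ker S) (c : CA),
      ψ ((k : Fin n → ℂ) + (c : Fin n → ℂ)) = (KK k : Fin n → ℂ) + (CC c : Fin n → ℂ) := by
    intro k c
    have : ((k : Fin n → ℂ) + (c : Fin n → ℂ)) =
        Submodule.prodEquivOfIsCompl _ _ hCA (k, c) := rfl
    rw [hψ, this]
    simp [Submodule.coe_prodEquivOfIsCompl']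
  -- key: TB (CC c) = S c
  have hkey : ∀ c : CA, TB (CC c : Fin n → ℂ) = S (c : Fin n → ℂ) := by
    intro c
    have hmk : (Submodule.Quotient.mk (CC c : Fin n → ℂ) :
        (Fin n → ℂ) ⧸ LinearMap.ker TB) = eq (Submodule.Quotient.mk (c : Fin n → ℂ)) := by
      have h1 : qB.symm (CC c) = (Submodule.Quotient.mk (CC c : Fin n → ℂ)) := by
        rw [hqB, Submodule.quotientEquivOfIsCompl_symm_apply]
      have h2 : qA.symm c = (Submodule.Quotient.mk (c : Fin n → ℂ)) := by
        rw [hqA, Submodule.quotientEquivOfIsCompl_symm_apply]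
      rw [← h1, hCC]
      simp [← h2]
    have := congrArg (fun z => (TB.quotKerEquivRange z : (Fin s × Fin n → ℂ) × (Fin s × Fin n → ℂ))) hmk
    rw [TB.quotKerEquivRange_apply_mk] at this
    rw [this, heq]
    simp only [LinearEquiv.trans_apply, LinearEquiv.apply_symm_apply]
    rw [LinearEquiv.coe_ofEq_apply, S.quotKerEquivRange_apply_mk]
  -- final verification
  refine ⟨ψ, fun i u v => ?_⟩
  obtain ⟨ku, cu, hku, hcu, hu⟩ := Submodule.codisjoint_iff_exists_add_eq.mp hCA.codisjoint u
  obtain ⟨kv, cv, hkv, hcv, hv⟩ := Submodule.codisjoint_iff_exists_add_eq.mp hCA.codisjoint v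
  -- ψ of KK-parts lands in the radical of B
  have hKB : ∀ (k : LinearMap.ker S) (x y : Fin n → ℂ),
      B i ((KK k : Fin n → ℂ)) y = 0 ∧ B i x ((KK k : Fin n → ℂ)) = 0 := by
    intro k x y
    have := (memTB (KK k : Fin n → ℂ)).mp (KK k).2
    exact ⟨(this i y).1, (this i x).2⟩
  -- CC c agrees with φ c modulo the radical of B
  have hCCrad : ∀ c : CA, ∀ j y, B j ((CC c : Fin n → ℂ)) y = B j (φ (c : Fin n → ℂ)) y ∧
      B j y ((CC c : Fin n → ℂ)) = B j y (φ (c : Fin n → ℂ)) := by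
    intro c j y
    have hker : (CC c : Fin n → ℂ) - φ (c : Fin n → ℂ) ∈ LinearMap.ker TB := by
      rw [LinearMap.mem_ker, map_sub, hkey c, hST, sub_eq_zero]
    have := (memTB _).mp hker
    constructor
    · have h0 := (this j y).1
      simpa [map_sub, sub_eq_zero] using h0
    · have h0 := (this j y).2
      simpa [map_sub, sub_eq_zero] using h0
  -- radical facts for A
  have hradAu := (memS ku).mp hku
  have hradAv := (memS kv).mp hkv
  have lhs : A i u v = A i cu cv := by
    rw [← hu, ← hv]
    simp only [map_add, LinearMap.add_apply]
    rw [(hradAu i kv).1, (hradAu i cv).1, (hradAv i cu).2]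
    ring
  have rhs : B i (ψ u) (ψ v) =
      B i ((CC ⟨cu, hcu⟩ : Fin n → ℂ)) ((CC ⟨cv, hcv⟩ : Fin n → ℂ)) := by
    rw [← hu, ← hv, hψapp ⟨ku, hku⟩ ⟨cu, hcu⟩, hψapp ⟨kv, hkv⟩ ⟨cv, hcv⟩]
    simp only [map_add, LinearMap.add_apply]
    rw [(hKB ⟨ku, hku⟩ 0 ((KK ⟨kv, hkv⟩ : Fin n → ℂ))).1,
        (hKB ⟨ku, hku⟩ 0 ((CC ⟨cv, hcv⟩ : Fin n → ℂ))).1,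
        (hKB ⟨kv, hkv⟩ ((CC ⟨cu, hcu⟩ : Fin n → ℂ)) 0).2]
    ring
  rw [lhs, rhs, (hCCrad ⟨cu, hcu⟩ i ((CC ⟨cv, hcv⟩ : Fin n → ℂ))).1,
      (hCCrad ⟨cv, hcv⟩ i (φ cu)).2]
  exact h i cu cv

end Aux

/-- For two finite families `(A_i)`, `(B_i)` of bilinear forms `ℂ^n × ℂ^n → ℂ`:
there is a homeomorphism `φ : ℂ^n → ℂ^n` with `A_i (u, v) = B_i (φ u, φ v)` for all
`i`, `u`, `v` if and only if there is a linear bijection `ψ` with the same property. -/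
theorem stmt_4 (n s : ℕ)
    (A B : Fin s → (Fin n → ℂ) →ₗ[ℂ] (Fin n → ℂ) →ₗ[ℂ] ℂ) :
    (∃ φ : (Fin n → ℂ) ≃ₜ (Fin n → ℂ), ∀ i u v, A i u v = B i (φ u) (φ v)) ↔
    (∃ ψ : (Fin n → ℂ) ≃ₗ[ℂ] (Fin n → ℂ), ∀ i u v, A i u v = B i (ψ u) (ψ v)) := by
  constructor
  · rintro ⟨φ, hφ⟩
    exact aux_main n s A B φ.toEquiv hφ
  · rintro ⟨ψ, hψ⟩
    exact ⟨ψ.toContinuousLinearEquiv.toHomeomorph, hψ⟩
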